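/- On ℝ³ with Cartesian coordinates, let η^ν = ρ b^ν dZ^1 ∧ dZ^2 with constants ρ, b^ν, and let U = u ∂/∂Z^1 with constant u. Then: (i) the evolution equation gives ∂_t η^ν = -d(ι_U η^ν) = 0, i.e. the dislocation field is stationary; (ii) Orowan's equation gives ∂_t θ^ν = -ι_U η^ν = -u ρ b^ν dZ^2 ≠ 0 whenever u ρ b^ν ≠ 0. In particular, a stationary dislocation field moving with nonzero velocity changes the lattice coframe, so the lattice evolution cannot be deduced from the evolution of the dislocation field alone. -/

import Mathlib

/-- The exterior derivative of a 1-form `γ`, evaluated at `x` on `(v, w)`. -/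
noncomputable def extDer1 {E : Type*} [NormedAddCommGroup E] [NormedSpace ℝ E]
    (γ : E → E → ℝ) (x v w : E) : ℝ :=
  fderiv ℝ (fun y => γ y w) x v - fderiv ℝ (fun y => γ y v) x w

/-- On `ℝ³`, for the uniform dislocation field
`η^ν = ρ b^ν dZ¹ ∧ dZ²` and constant velocity `U = u ∂/∂Z¹`:
(i) `∂_t η^ν = -d(ι_U η^ν) = 0` (the dislocation field is stationary);
(ii) `-ι_U η^ν = -uρb^ν dZ²`, which is a nonzero 1-form whenever `uρb^ν ≠ 0`.
Hence Orowan's equation `∂_t θ^ν = -ι_U η^ν` changes the lattice coframe even though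
the dislocation field is stationary. -/
theorem stationary_dislocation_moving_changes_lattice
    (ρ u : ℝ) (b : Fin 3 → ℝ)
    (η : Fin 3 → (Fin 3 → ℝ) → (Fin 3 → ℝ) → (Fin 3 → ℝ) → ℝ)
    (U : (Fin 3 → ℝ) → (Fin 3 → ℝ))
    (hη : ∀ ν x v w, η ν x v w = ρ * b ν * (v 0 * w 1 - v 1 * w 0))
    (hU : ∀ x, U x = fun i => if i = 0 then u else 0) :
    (∀ (ν : Fin 3) (x v w : Fin 3 → ℝ),
        extDer1 (fun y p => η ν y (U y) p) x v w = 0) ∧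
    (∀ (ν : Fin 3) (x v : Fin 3 → ℝ),
        - η ν x (U x) v = -(u * ρ * b ν) * v 1) ∧
    (∀ ν : Fin 3, u * ρ * b ν ≠ 0 →
        ∃ (x v : Fin 3 → ℝ), - η ν x (U x) v ≠ 0) := by
  have key : ∀ ν (x v : Fin 3 → ℝ), η ν x (U x) v = u * ρ * b ν * v 1 := by
    intro ν x v
    rw [hη, hU]
    simp
    ring
  refine ⟨?_, ?_, ?_⟩
  · intro ν x v w
    unfold extDer1
    have h1 : (fun y => η ν y (U y) w) = fun _ => u * ρ * b ν * w 1 := by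
      funext y; exact key ν y w
    have h2 : (fun y => η ν y (U y) v) = fun _ => u * ρ * b ν * v 1 := by
      funext y; exact key ν y v
    rw [h1, h2, fderiv_fun_const]
    simp
  · intro ν x v
    rw [key]; ring
  · intro ν h
    exact ⟨0, fun _ => 1, by rw [key]; simpa using h⟩
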